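/- For all integers 0 ≤ j < d, define H^d_j(x) = Σ_{i=0}^{j} C(j,i)·C(x+d−1−i, d−1) ∈ ℚ[x]. Then (−1)^{d−1}·H^d_j(x) = H^d_j(−d+j−x) as polynomials. -/

import Mathlib

open Polynomial

/-- The binomial coefficient polynomial `C(x + c, r) = (x+c)(x+c-1)⋯(x+c-r+1)/r!`. -/
noncomputable def binomPoly (c r : ℕ) : Polynomial ℚ :=
  Polynomial.C (1 / (r.factorial : ℚ)) *
    ∏ l ∈ Finset.range r, (Polynomial.X + Polynomial.C ((c : ℚ) - l))

/-- `H^d_j(x) = ∑_{i=0}^{j} C(j,i)·C(x + d - 1 - i, d - 1)`. -/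
noncomputable def Hdj (d j : ℕ) : Polynomial ℚ :=
  ∑ i ∈ Finset.range (j + 1), Polynomial.C ((j.choose i : ℚ)) * binomPoly (d - 1 - i) (d - 1)

lemma binomPoly_comp (c r : ℕ) (a : ℚ) (c' : ℕ)
    (hc' : ∀ l < r, (c' : ℚ) - ((r - 1 - l : ℕ) : ℚ) = (l : ℚ) - a - c) :
    (binomPoly c r).comp (Polynomial.C a - Polynomial.X)
      = Polynomial.C ((-1 : ℚ) ^ r) * binomPoly c' r := by
  unfold binomPoly
  rw [mul_comp, C_comp, prod_comp]
  have step : ∀ l ∈ Finset.range r,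
      (Polynomial.X + Polynomial.C ((c : ℚ) - l)).comp (Polynomial.C a - Polynomial.X)
        = Polynomial.C (-1 : ℚ) * (Polynomial.X + Polynomial.C ((l : ℚ) - a - c)) := by
    intro l _
    simp only [add_comp, X_comp, C_comp]
    rw [show ((l : ℚ) - a - c) = -(a + ((c : ℚ) - l)) by ring]
    simp only [map_neg, map_add, map_one]
    ring
  rw [Finset.prod_congr rfl step, Finset.prod_mul_distrib, Finset.prod_const,
    Finset.card_range, ← map_pow]
  have hrefl : ∏ l ∈ Finset.range r,
      (Polynomial.X + Polynomial.C ((c' : ℚ) - l))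
      = ∏ l ∈ Finset.range r, (Polynomial.X + Polynomial.C ((l : ℚ) - a - c)) := by
    rw [← Finset.prod_range_reflect (fun l => Polynomial.X + Polynomial.C ((c' : ℚ) - l)) r]
    refine Finset.prod_congr rfl fun l hl => ?_
    rw [Finset.mem_range] at hl
    rw [hc' l hl]
  rw [hrefl]; ring

theorem Hdj_symmetry (d j : ℕ) (h : j < d) :
    Polynomial.C ((-1 : ℚ) ^ (d - 1)) * Hdj d j
      = (Hdj d j).comp (Polynomial.C ((j : ℚ) - d) - Polynomial.X) := by
  unfold Hdj
  rw [sum_comp]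
  have key : ∀ i ∈ Finset.range (j + 1),
      (Polynomial.C ((j.choose i : ℚ)) * binomPoly (d - 1 - i) (d - 1)).comp
          (Polynomial.C ((j : ℚ) - d) - Polynomial.X)
        = Polynomial.C ((-1 : ℚ) ^ (d - 1)) *
            (Polynomial.C ((j.choose (j - i) : ℚ)) * binomPoly (d - 1 - (j - i)) (d - 1)) := by
    intro i hi
    rw [Finset.mem_range] at hi
    have hij : i ≤ j := Nat.lt_succ_iff.mp hi
    have h1 : i ≤ d - 1 := le_trans hij (Nat.le_sub_one_of_lt h)
    have h2 : j - i ≤ d - 1 := le_trans (Nat.sub_le _ _) (Nat.le_sub_one_of_lt h)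
    rw [mul_comp, C_comp, binomPoly_comp (d - 1 - i) (d - 1) ((j : ℚ) - d) (d - 1 - (j - i))
      ?_, Nat.choose_symm hij]
    · ring
    · intro l hl
      have hl' : l ≤ d - 1 - 1 := Nat.le_sub_one_of_lt hl
      rw [Nat.cast_sub h2, Nat.cast_sub hl', Nat.cast_sub hij,
        Nat.cast_sub (show 1 ≤ d - 1 by omega), Nat.cast_sub h1,
        Nat.cast_sub (show 1 ≤ d by omega)]
      push_cast
      ring
  rw [Finset.sum_congr rfl key, ← Finset.mul_sum]
  congr 1
  rw [← Finset.sum_range_reflect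
    (fun i => Polynomial.C ((j.choose i : ℚ)) * binomPoly (d - 1 - i) (d - 1)) (j + 1)]
  refine Finset.sum_congr rfl fun i hi => ?_
  simp only [Nat.add_sub_cancel]
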